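/- The set A₁ of eventually-zero sequences is not a Gδ subset of ℓ∞, i.e. A₁ cannot be written as a countable intersection of open subsets of ℓ∞. -/

import Mathlib

open BoundedContinuousFunction

/-- The set of eventually-zero sequences in ℓ∞. -/
def A₁ : Set (ℕ →ᵇ ℝ) := {x | ∃ m : ℕ, ∀ n ≥ m, x n = 0}

/-- Coordinate "delta" function. -/
noncomputable def eδ (m : ℕ) : ℕ →ᵇ ℝ :=
  ofNormedAddCommGroupDiscrete (fun n => if n = m then (1:ℝ) else 0) 1 (by
    intro n; dsimp; split <;> simp)

lemma eδ_apply (m n : ℕ) : eδ m n = if n = m then (1:ℝ) else 0 := rfl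

lemma eδ_mem (m : ℕ) : eδ m ∈ A₁ := by
  refine ⟨m + 1, fun n hn => ?_⟩
  rw [eδ_apply, if_neg]; omega

/-- A₁ is a submodule. -/
noncomputable def S₁ : Submodule ℝ (ℕ →ᵇ ℝ) where
  carrier := A₁
  zero_mem' := ⟨0, fun n _ => rfl⟩
  add_mem' := by
    rintro x y ⟨mx, hx⟩ ⟨my, hy⟩
    exact ⟨max mx my, fun n hn => by
      simp [hx n (le_trans (le_max_left _ _) hn), hy n (le_trans (le_max_right _ _) hn)]⟩
  smul_mem' := by
    rintro c x ⟨m, hx⟩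
    exact ⟨m, fun n hn => by simp [hx n hn]⟩

/-- A₁ is not a Gδ subset of ℓ∞: it is not a countable intersection of open sets. -/
theorem A₁_not_Gδ :
    ¬ ∃ U : ℕ → Set (ℕ →ᵇ ℝ), (∀ n, IsOpen (U n)) ∧ A₁ = ⋂ n, U n := by
  rintro ⟨U, hUo, hA⟩
  set X : Set (ℕ →ᵇ ℝ) := closure A₁ with hX
  haveI : CompleteSpace X := isClosed_closure.completeSpace_coe
  set A' : Set X := Subtype.val ⁻¹' A₁ with hA'
  have hAX : A₁ ⊆ X := subset_closure
  have hdA : Dense A' := by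
    rw [Subtype.dense_iff]
    have : Subtype.val '' A' = A₁ := by
      rw [hA', Subtype.image_preimage_coe]
      exact Set.inter_eq_right.mpr hAX
    rw [this]
  -- A' is residual in X
  have hres : A' ∈ residual X := by
    have heq : A' = ⋂ n, (Subtype.val ⁻¹' U n : Set X) := by
      rw [hA', hA, Set.preimage_iInter]
    rw [heq]
    refine countable_iInter_mem.mpr fun n => residual_of_dense_open
      ((hUo n).preimage continuous_subtype_val) ?_
    refine Dense.mono ?_ hdA
    rw [hA', hA]; exact Set.preimage_mono (Set.iInter_subset _ n)
  -- A' is meagre in X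
  have hclX : ∀ x ∈ X, ∀ c : ℝ, ∀ m : ℕ, x + c • eδ m ∈ X := by
    intro x hx c m
    have hx' : x ∈ S₁.topologicalClosure := by
      have : (S₁.topologicalClosure : Set (ℕ →ᵇ ℝ)) = closure A₁ := Submodule.topologicalClosure_coe S₁
      rw [← SetLike.mem_coe, this]; exact hx
    have he : (c • eδ m : ℕ →ᵇ ℝ) ∈ S₁.topologicalClosure :=
      Submodule.smul_mem _ c (Submodule.le_topologicalClosure _ (eδ_mem m))
    have h3 := Submodule.add_mem _ hx' he
    have : (S₁.topologicalClosure : Set (ℕ →ᵇ ℝ)) = closure A₁ := Submodule.topologicalClosure_coe S₁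
    rw [← SetLike.mem_coe, this] at h3
    exact h3
  set C : ℕ → Set X := fun m => {x : X | ∀ n ≥ m, (x : ℕ →ᵇ ℝ) n = 0} with hC
  have hCcl : ∀ m, IsClosed (C m) := by
    intro m
    have : C m = ⋂ n, ⋂ _ : n ≥ m, {x : X | (x : ℕ →ᵇ ℝ) n = 0} := by
      ext x; simp [hC]
    rw [this]
    exact isClosed_iInter fun n => isClosed_iInter fun _ =>
      isClosed_eq ((continuous_eval_const n).comp continuous_subtype_val) continuous_const
  have hCint : ∀ m, interior (C m) = ∅ := by
    intro m
    by_contra h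
    obtain ⟨x, hx⟩ := Set.nonempty_iff_ne_empty.mpr h
    obtain ⟨ε, hε, hball⟩ := Metric.isOpen_iff.mp isOpen_interior x hx
    have hxC : x ∈ C m := interior_subset hx
    set y₀ : ℕ →ᵇ ℝ := (x : ℕ →ᵇ ℝ) + (ε/2) • eδ m with hy₀
    have hy₀X : y₀ ∈ X := hclX _ x.2 _ _
    set y : X := ⟨y₀, hy₀X⟩ with hy
    have hdist : dist y x < ε := by
      rw [Subtype.dist_eq]
      have : dist y₀ (x : ℕ →ᵇ ℝ) ≤ ε/2 := by
        refine (dist_le (by positivity)).mpr fun n => ?_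
        rw [hy₀]
        simp only [coe_add, coe_smul, Pi.add_apply, Pi.smul_apply, smul_eq_mul]
        rw [dist_eq_norm, add_sub_cancel_left, Real.norm_eq_abs, abs_mul, eδ_apply]
        split
        · simp [abs_of_pos (by positivity : (0:ℝ) < ε/2)]
        · simp; positivity
      linarith
    have hyC : y ∈ C m := interior_subset (hball (Metric.mem_ball.mpr hdist))
    have h1 : y₀ m = 0 := hyC m le_rfl
    have h2 : y₀ m = ε/2 := by
      rw [hy₀]
      simp only [coe_add, coe_smul, Pi.add_apply, Pi.smul_apply, smul_eq_mul]
      rw [hxC m le_rfl, eδ_apply, if_pos rfl]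
      ring
    rw [h1] at h2
    linarith
  have hmg : IsMeagre A' := by
    have hsub : A' = ⋃ m, C m := by
      ext x
      simp only [hA', Set.mem_preimage, Set.mem_iUnion, A₁, Set.mem_setOf_eq, hC]
    rw [hsub]
    refine isMeagre_iUnion fun m => ?_
    exact residual_of_dense_open (hCcl m).isOpen_compl
      (interior_eq_empty_iff_dense_compl.mp (hCint m))
  -- contradiction
  have hres' : A'ᶜ ∈ residual X := hmg
  have : (A' ∩ A'ᶜ : Set X) ∈ residual X := Filter.inter_mem hres hres'
  rw [Set.inter_compl_self] at this
  have hd : Dense (∅ : Set X) := dense_of_mem_residual this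
  have hne : Nonempty X := ⟨⟨0, hAX ⟨0, fun n _ => rfl⟩⟩⟩
  exact Set.not_nonempty_empty (hd.nonempty)
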